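/- Let ρ be a d×d complex density matrix, ψ ∈ ℂ^d a unit vector, and α > 0. Let E_d := λ_min(ρ − α|ψ⟩⟨ψ|) denote the smallest eigenvalue. If E_d ≤ 0, then the trace norm satisfies ‖ρ − α·|ψ⟩⟨ψ|‖₁ = 1 − α − 2·E_d. Consequently, the Helstrom error P_err = (1 − |γ|·‖ρ − α|ψ⟩⟨ψ|‖₁)/2 is a strictly increasing affine function of E_d, so minimizing the error is equivalent to minimizing the smallest eigenvalue E_d. -/

import Mathlib

open Matrix BigOperators ComplexOrder

/-- The trace norm of a Hermitian matrix: the sum of the absolute values of its eigenvalues. -/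
noncomputable def traceNorm {n : Type*} [Fintype n] [DecidableEq n]
    {A : Matrix n n ℂ} (hA : A.IsHermitian) : ℝ :=
  ∑ i, |hA.eigenvalues i|

lemma sum_eigenvalues_eq_trace' {n : Type*} [Fintype n] [DecidableEq n]
    {A : Matrix n n ℂ} (hA : A.IsHermitian) :
    ((∑ i, hA.eigenvalues i : ℝ) : ℂ) = A.trace := by
  simpa [Complex.ofReal_sum] using (hA.trace_eq_sum_eigenvalues).symm

lemma at_most_one_neg {d : ℕ}
    (ρ : Matrix (Fin d) (Fin d) ℂ) (hρ : ρ.PosSemidef)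
    (ψ : Fin d → ℂ)
    (α : ℝ) (hα : 0 < α)
    (hM : (ρ - α • vecMulVec ψ (star ψ)).IsHermitian)
    (i j : Fin d) (hij : i ≠ j)
    (hi : hM.eigenvalues i < 0) (hj : hM.eigenvalues j < 0) : False := by
  set M := ρ - α • vecMulVec ψ (star ψ) with hMdef
  set v : Fin d → ℂ := ⇑(hM.eigenvectorBasis i) with hv
  set w : Fin d → ℂ := ⇑(hM.eigenvectorBasis j) with hw
  have hon := orthonormal_iff_ite.mp hM.eigenvectorBasis.orthonormal
  have hvv : star v ⬝ᵥ v = 1 := by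
    rw [hv, dotProduct_comm, ← EuclideanSpace.inner_eq_star_dotProduct]; exact (hon i i).trans (if_pos rfl)
  have hww : star w ⬝ᵥ w = 1 := by
    rw [hw, dotProduct_comm, ← EuclideanSpace.inner_eq_star_dotProduct]; exact (hon j j).trans (if_pos rfl)
  have hvw : star v ⬝ᵥ w = 0 := by
    rw [hv, hw, dotProduct_comm, ← EuclideanSpace.inner_eq_star_dotProduct]; exact (hon i j).trans (if_neg hij)
  have hwv : star w ⬝ᵥ v = 0 := by
    rw [hv, hw, dotProduct_comm, ← EuclideanSpace.inner_eq_star_dotProduct]; exact (hon j i).trans (if_neg hij.symm)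
  set a : ℂ := star ψ ⬝ᵥ v with ha
  set b : ℂ := star ψ ⬝ᵥ w with hb
  obtain ⟨c₁, c₂, hcne, hc0⟩ : ∃ c₁ c₂ : ℂ, ¬(c₁ = 0 ∧ c₂ = 0) ∧ c₁ * a + c₂ * b = 0 := by
    by_cases h : a = 0
    · exact ⟨1, 0, by simp, by simp [h]⟩
    · exact ⟨b, -a, fun hc => h (by simpa using hc.2), by ring⟩
  set u : Fin d → ℂ := c₁ • v + c₂ • w with hu
  have hpsiu : star ψ ⬝ᵥ u = 0 := by
    simp only [hu, dotProduct_add, dotProduct_smul, smul_eq_mul, ← ha, ← hb]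
    linear_combination hc0
  have hMu : M *ᵥ u = (c₁ * hM.eigenvalues i) • v + (c₂ * hM.eigenvalues j) • w := by
    simp only [hu, mulVec_add, mulVec_smul, hM.mulVec_eigenvectorBasis, ← hv, ← hw]
    rw [hv, hw, hM.mulVec_eigenvectorBasis, hM.mulVec_eigenvectorBasis]
    ext x
    simp [Complex.real_smul]
    ring
  have key : star u ⬝ᵥ (M *ᵥ u) =
      ((‖c₁‖^2 * hM.eigenvalues i + ‖c₂‖^2 * hM.eigenvalues j : ℝ) : ℂ) := by
    rw [hMu]
    simp only [hu, star_add, star_smul, add_dotProduct, dotProduct_add, smul_dotProduct,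
      dotProduct_smul, hvv, hww, hvw, hwv, smul_eq_mul, mul_one, mul_zero, add_zero, zero_add]
    simp only [RCLike.star_def]
    push_cast
    linear_combination (hM.eigenvalues i : ℂ) * Complex.mul_conj' c₁ +
      (hM.eigenvalues j : ℂ) * Complex.mul_conj' c₂
  -- but also star u ⬝ᵥ (M *ᵥ u) = star u ⬝ᵥ (ρ *ᵥ u) which has nonneg real part
  have hMu2 : M *ᵥ u = ρ *ᵥ u := by
    rw [hMdef, sub_mulVec, smul_mulVec]
    have : vecMulVec ψ (star ψ) *ᵥ u = 0 := by
      ext x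
      simp [vecMulVec_apply, mulVec, dotProduct, mul_assoc, ← Finset.mul_sum]
      right
      simpa [dotProduct] using hpsiu
    rw [this]
    simp
  have hnn : 0 ≤ Complex.re (star u ⬝ᵥ (M *ᵥ u)) := by
    rw [hMu2]
    exact hρ.re_dotProduct_nonneg u
  rw [key] at hnn
  simp only [Complex.ofReal_re] at hnn
  have hc1 : 0 < ‖c₁‖^2 ∨ 0 < ‖c₂‖^2 := by
    by_contra h
    push_neg at h
    exact hcne ⟨by simpa using le_antisymm h.1 (by positivity),
      by simpa using le_antisymm h.2 (by positivity)⟩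
  rcases hc1 with h | h
  · nlinarith [mul_nonneg (sq_nonneg ‖c₂‖) (le_of_lt (neg_pos.mpr hj)), mul_pos h (neg_pos.mpr hi)]
  · nlinarith [mul_nonneg (sq_nonneg ‖c₁‖) (le_of_lt (neg_pos.mpr hi)), mul_pos h (neg_pos.mpr hj)]

theorem trace_norm_via_min_eigenvalue {d : ℕ}
    (ρ : Matrix (Fin d) (Fin d) ℂ) (hρ : ρ.PosSemidef) (hρtr : ρ.trace = 1)
    (ψ : Fin d → ℂ) (hψ : ∑ i, ‖ψ i‖ ^ 2 = 1)
    (α : ℝ) (hα : 0 < α)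
    (hM : (ρ - α • vecMulVec ψ (star ψ)).IsHermitian)
    (Ed : ℝ) (hle : ∀ i, Ed ≤ hM.eigenvalues i) (hmem : ∃ i, hM.eigenvalues i = Ed)
    (hEd : Ed ≤ 0) (γ : ℝ) :
    traceNorm hM = 1 - α - 2 * Ed ∧
      (1 - |γ| * traceNorm hM) / 2 = (1 - |γ| * (1 - α - 2 * Ed)) / 2 ∧
      (γ ≠ 0 → StrictMono fun E : ℝ => (1 - |γ| * (1 - α - 2 * E)) / 2) := by
  obtain ⟨k, hk⟩ := hmem
  -- trace of the rank-one projector is 1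
  have htψ : (vecMulVec ψ (star ψ)).trace = 1 := by
    rw [Matrix.trace]
    have hd : ∀ i, (vecMulVec ψ (star ψ)).diag i = ((‖ψ i‖ ^ 2 : ℝ) : ℂ) := fun i => by
      simp [Matrix.diag, vecMulVec_apply, RCLike.star_def, Complex.mul_conj']
    simp only [hd]
    rw [← Complex.ofReal_sum, hψ, Complex.ofReal_one]
  -- sum of eigenvalues equals 1 - α
  have hsum : ∑ i, hM.eigenvalues i = 1 - α := by
    have h1 : ((∑ i, hM.eigenvalues i : ℝ) : ℂ) = ((1 - α : ℝ) : ℂ) := by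
      rw [sum_eigenvalues_eq_trace' hM, Matrix.trace_sub, Matrix.trace_smul, hρtr, htψ,
        Complex.real_smul, mul_one]
      push_cast
      ring
    exact_mod_cast h1
  -- all eigenvalues other than the k-th are nonnegative
  have hpos : ∀ i, i ≠ k → 0 ≤ hM.eigenvalues i := by
    intro i hik
    by_contra h
    push_neg at h
    have hkneg : hM.eigenvalues k < 0 := lt_of_le_of_lt (hk ▸ hle i) h
    exact at_most_one_neg ρ hρ ψ α hα hM i k hik h hkneg
  have hTN : traceNorm hM = 1 - α - 2 * Ed := by
    unfold traceNorm
    rw [← Finset.sum_erase_add _ _ (Finset.mem_univ k)]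
    have h2 : ∑ i ∈ Finset.univ.erase k, |hM.eigenvalues i|
        = ∑ i ∈ Finset.univ.erase k, hM.eigenvalues i :=
      Finset.sum_congr rfl fun i hi => abs_of_nonneg (hpos i (Finset.ne_of_mem_erase hi))
    have h3 : ∑ i ∈ Finset.univ.erase k, hM.eigenvalues i + hM.eigenvalues k
        = ∑ i, hM.eigenvalues i := Finset.sum_erase_add _ _ (Finset.mem_univ k)
    have h4 : |hM.eigenvalues k| = -Ed := by rw [hk]; exact abs_of_nonpos hEd
    rw [h2, h4]
    rw [hsum, hk] at h3
    linarith
  refine ⟨hTN, by rw [hTN], fun hγ => ?_⟩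
  intro x y hxy
  have hγ' : 0 < |γ| := abs_pos.mpr hγ
  simp only
  nlinarith
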